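/- For partitions $\lambda, \mu$ with exactly $N$ parts, if $\mu \not\subseteq \lambda$ (i.e., $\mu_i > \lambda_i$ for some $i$), then $D^N_{\lambda,\mu} = \det\left( \binom{\lambda_i + N - i}{\mu_j + N - j} \right)_{1 \le i,j \le N} = 0$. -/

import Mathlib

/-- If `m ⊄ l` (i.e. `l i < m i` for some `i`), then the determinant
`D^N_{l,m} = det (choose (l i + N - i) (m j + N - j))` vanishes. -/
theorem D_lambda_mu_eq_zero_of_not_subset
    (N : ℕ) (l m : Fin N → ℕ)
    (hl : ∀ i j : Fin N, i ≤ j → l j ≤ l i)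
    (hm : ∀ i j : Fin N, i ≤ j → m j ≤ m i)
    (hns : ∃ i : Fin N, l i < m i) :
    (Matrix.det (fun i j : Fin N =>
      (Nat.choose (l i + (N - 1 - i.val)) (m j + (N - 1 - j.val)) : ℤ))) = 0 := by
  obtain ⟨k, hk⟩ := hns
  refine (Matrix.det_apply _).trans ?_
  apply Finset.sum_eq_zero
  intro σ _
  have hpig : ∃ j : Fin N, j ≤ k ∧ k ≤ σ j := by
    by_contra h
    push_neg at h
    have hsub : ∀ j ∈ Finset.Iic k, σ j ∈ Finset.Iio k := fun j hj =>
      Finset.mem_Iio.mpr (h j (Finset.mem_Iic.mp hj))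
    have hcard := Finset.card_le_card_of_injOn σ hsub σ.injective.injOn
    rw [Fin.card_Iic, Fin.card_Iio] at hcard
    omega
  obtain ⟨j, hjk, hkj⟩ := hpig
  have hz : Nat.choose (l (σ j) + (N - 1 - (σ j).val)) (m j + (N - 1 - j.val)) = 0 := by
    apply Nat.choose_eq_zero_of_lt
    have h1 : l (σ j) ≤ l k := hl k (σ j) hkj
    have h2 : m k ≤ m j := hm j k hjk
    have h3 : (k : ℕ) ≤ σ j := hkj
    have h4 : (j : ℕ) ≤ k := hjk
    have h5 : ((σ j : Fin N) : ℕ) < N := (σ j).isLt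
    omega
  have : (fun i j : Fin N =>
      (Nat.choose (l i + (N - 1 - i.val)) (m j + (N - 1 - j.val)) : ℤ)) (σ j) j = 0 := by
    simp [hz]
  rw [Finset.prod_eq_zero (Finset.mem_univ j) this]
  simp
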